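/- Let t ≥ 2 and let k_1 < k_2 < ... < k_t be odd natural numbers, and set k_0 := 0. Then for every complex number x, (x+1)·∑_{j=1}^{t} j·(∑_{i=k_t - k_{t-j+1}}^{k_t - k_{t-j} - 1} (-1)^i x^i) = t·x^{k_t} + ∑_{i=1}^{t-1} x^{k_t - k_i} + 1. -/

import Mathlib

lemma aux1 (x : ℂ) (a : ℕ) : ∀ b, a ≤ b →
    (x + 1) * ∑ i ∈ Finset.Ico a b, (-1 : ℂ) ^ i * x ^ i
      = (-1) ^ a * x ^ a - (-1) ^ b * x ^ b := by
  intro b hb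
  induction b, hb using Nat.le_induction with
  | base => simp
  | succ b hb ih =>
    rw [Finset.sum_Ico_succ_top hb, mul_add, ih, pow_succ, pow_succ]
    ring

lemma aux2 (G : ℕ → ℂ) : ∀ t : ℕ,
    ∑ j ∈ Finset.Icc 1 t, (j : ℂ) * (G (j - 1) - G j)
      = (∑ m ∈ Finset.Ico 0 t, G m) - t * G t := by
  intro t
  induction t with
  | zero => simp
  | succ t ih =>
    rw [Finset.sum_Icc_succ_top (by omega : 1 ≤ t + 1),
      Finset.sum_Ico_succ_top (Nat.zero_le t), ih]
    have : t + 1 - 1 = t := by omega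
    rw [this]
    push_cast
    ring

theorem stmt14 (t : ℕ) (ht : 2 ≤ t) (k : ℕ → ℕ) (hk0 : k 0 = 0)
    (hmono : ∀ i j, 1 ≤ i → i < j → j ≤ t → k i < k j)
    (hodd : ∀ i, 1 ≤ i → i ≤ t → Odd (k i)) :
    ∀ x : ℂ, (x + 1) *
        ∑ j ∈ Finset.Icc 1 t, (j : ℂ) *
          ∑ i ∈ Finset.Ico (k t - k (t - j + 1)) (k t - k (t - j)), (-1 : ℂ) ^ i * x ^ i =
      (t : ℂ) * x ^ (k t) + (∑ i ∈ Finset.Icc 1 (t - 1), x ^ (k t - k i)) + 1 := by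
  intro x
  have ht1 : 1 ≤ t := by omega
  set G : ℕ → ℂ := fun m => (-1 : ℂ) ^ (k t - k (t - m)) * x ^ (k t - k (t - m)) with hG
  have step1 : (x + 1) * ∑ j ∈ Finset.Icc 1 t, (j : ℂ) *
      ∑ i ∈ Finset.Ico (k t - k (t - j + 1)) (k t - k (t - j)), (-1 : ℂ) ^ i * x ^ i
      = ∑ j ∈ Finset.Icc 1 t, (j : ℂ) * (G (j - 1) - G j) := by
    rw [Finset.mul_sum]
    apply Finset.sum_congr rfl
    intro j hj
    rw [Finset.mem_Icc] at hj
    have hab : k t - k (t - j + 1) ≤ k t - k (t - j) := by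
      apply Nat.sub_le_sub_left
      rcases Nat.eq_zero_or_pos (t - j) with h0 | h1
      · rw [h0, hk0]; exact Nat.zero_le _
      · exact (hmono (t - j) (t - j + 1) h1 (Nat.lt_succ_self _) (by omega)).le
    rw [mul_left_comm, aux1 x _ _ hab]
    have hidx : t - j + 1 = t - (j - 1) := by omega
    rw [hidx]
  rw [step1, aux2 G t]
  have hGt : G t = -(x ^ k t) := by
    simp only [hG, Nat.sub_self, hk0, Nat.sub_zero]
    rw [(hodd t ht1 le_rfl).neg_one_pow]
    ring
  have hGm : ∀ m ∈ Finset.Icc 1 (t - 1), G m = x ^ (k t - k (t - m)) := by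
    intro m hm
    rw [Finset.mem_Icc] at hm
    have h1 : 1 ≤ t - m := by omega
    have h2 : t - m ≤ t := by omega
    have hle : k (t - m) ≤ k t := by
      rcases Nat.eq_or_lt_of_le h2 with h | h
      · rw [h]
      · exact (hmono (t - m) t h1 h le_rfl).le
    have heven : Even (k t - k (t - m)) :=
      Nat.Odd.sub_odd (hodd t ht1 le_rfl) (hodd (t - m) h1 h2)
    simp only [hG]
    rw [heven.neg_one_pow, one_mul]
  have hsum : ∑ m ∈ Finset.Ico 0 t, G m
      = 1 + ∑ i ∈ Finset.Icc 1 (t - 1), x ^ (k t - k i) := by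
    rw [Finset.sum_eq_sum_Ico_succ_bot (by omega : 0 < t)]
    have hG0 : G 0 = 1 := by simp [hG]
    rw [hG0]
    congr 1
    have hIcoIcc : Finset.Ico (0 + 1) t = Finset.Icc 1 (t - 1) := by
      ext a; simp only [Finset.mem_Ico, Finset.mem_Icc]; omega
    rw [hIcoIcc]
    refine Finset.sum_nbij' (fun m => t - m) (fun i => t - i) ?_ ?_ ?_ ?_ ?_
    · intro a ha; simp only [Finset.mem_Icc] at ha ⊢; omega
    · intro a ha; simp only [Finset.mem_Icc] at ha ⊢; omega
    · intro a ha; simp only [Finset.mem_Icc] at ha; omega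
    · intro a ha; simp only [Finset.mem_Icc] at ha; omega
    · intro a ha; exact hGm a ha
  rw [hsum, hGt]
  ring
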